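/- Let S be a set and B a bounded self-adjoint operator on l²(S) with ⟨f, B f⟩ ≥ λ⟨f, f⟩ for all f and some λ > 0 (so B is boundedly invertible). Then for every x ∈ S, inf{⟨e_x − f, B(e_x − f)⟩ : f in the linear span of {e_y : y ∈ S, y ≠ x}} = ( ⟨e_x, B^{-1} e_x⟩ )^{-1}. -/

import Mathlib

/-- The standard basis vector `e_x` of `l²(S)`. -/
noncomputable def evec {S : Type*} [DecidableEq S] (x : S) : lp (fun _ : S => ℂ) 2 :=
  lp.single 2 x 1

set_option maxHeartbeats 1000000 in
/-- **The variational infimum as the reciprocal of a diagonal entry of the inverse.**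
Let `B` be a bounded self-adjoint operator on `l²(S)` with `⟨f, Bf⟩ ≥ λ⟨f,f⟩` for some
`λ > 0` (so `B` is boundedly invertible).  Then for every `x ∈ S`,
`inf {⟨e_x − f, B(e_x − f)⟩ : f ∈ span {e_y : y ≠ x}} = (⟨e_x, B⁻¹ e_x⟩)⁻¹`. -/
theorem statement11 {S : Type*} [DecidableEq S]
    (B : lp (fun _ : S => ℂ) 2 →L[ℂ] lp (fun _ : S => ℂ) 2)
    (hsa : ∀ f g : lp (fun _ : S => ℂ) 2, (inner ℂ (B f) g : ℂ) = inner ℂ f (B g))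
    (lam : ℝ) (hlam : 0 < lam)
    (hcoer : ∀ f : lp (fun _ : S => ℂ) 2, lam * ‖f‖ ^ 2 ≤ (inner ℂ f (B f) : ℂ).re)
    (x : S) :
    ∃ Binv : lp (fun _ : S => ℂ) 2 →L[ℂ] lp (fun _ : S => ℂ) 2,
      (∀ f, B (Binv f) = f) ∧ (∀ f, Binv (B f) = f) ∧
      ((sInf ((fun f => (inner ℂ (evec x - f) (B (evec x - f)) : ℂ).re) ''
          (Submodule.span ℂ (evec '' {y : S | y ≠ x}) :
            Set (lp (fun _ : S => ℂ) 2))) : ℝ) : ℂ) =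
        (inner ℂ (evec x) (Binv (evec x)) : ℂ)⁻¹ := by
  classical
  -- ## Part 1: construction of the inverse
  have hlb : ∀ f : lp (fun _ : S => ℂ) 2, lam * ‖f‖ ≤ ‖B f‖ := by
    intro f
    rcases eq_or_ne f 0 with rfl | hf
    · simp
    · have h1 := hcoer f
      have h2 : (inner ℂ f (B f) : ℂ).re ≤ ‖(inner ℂ f (B f) : ℂ)‖ := Complex.re_le_norm _
      have h3 : ‖(inner ℂ f (B f) : ℂ)‖ ≤ ‖f‖ * ‖B f‖ := norm_inner_le_norm _ _
      have hfpos : 0 < ‖f‖ := norm_pos_iff.mpr hf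
      nlinarith
  have hanti : AntilipschitzWith (lam⁻¹).toNNReal B := by
    apply B.antilipschitz_of_bound
    intro f
    have := hlb f
    have h2 : ‖f‖ ≤ lam⁻¹ * ‖B f‖ := by
      rw [le_inv_mul_iff₀ hlam]; linarith
    calc ‖f‖ ≤ lam⁻¹ * ‖B f‖ := h2
      _ ≤ (lam⁻¹).toNNReal * ‖B f‖ := by
          gcongr
          exact (Real.le_coe_toNNReal _)
  have hker : B.ker = ⊥ := LinearMap.ker_eq_bot.mpr hanti.injective
  have hclosed : IsClosed (Set.range B) := hanti.isClosed_range B.uniformContinuous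
  have hclosed' : IsClosed ((B.range : Submodule ℂ _) :
      Set (lp (fun _ : S => ℂ) 2)) := hclosed
  haveI : CompleteSpace (B.range : Submodule ℂ _) := hclosed'.completeSpace_coe
  have hrange : B.range = ⊤ := by
    rw [← Submodule.orthogonal_eq_bot_iff, Submodule.eq_bot_iff]
    intro v hv
    have h2 : (inner ℂ (B v) (B v) : ℂ) = 0 :=
      (hsa (B v) v).symm.trans (hv (B (B v)) ⟨B v, rfl⟩)
    have hBv : B v = 0 := inner_self_eq_zero.mp h2
    have := hlb v
    rw [hBv] at this
    simp only [norm_zero] at this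
    have : ‖v‖ ≤ 0 := by nlinarith
    exact norm_le_zero_iff.mp this
  let E := ContinuousLinearEquiv.ofBijective B hker hrange
  have hEB : ∀ f, E f = B f := fun f => by rw [ContinuousLinearEquiv.coeFn_ofBijective]
  refine ⟨E.symm.toContinuousLinearMap, ?_, ?_, ?_⟩
  · intro f
    have : B (E.symm f) = E (E.symm f) := (hEB _).symm
    simp [this]
  · intro f
    rw [← hEB]
    simp
  -- ## Part 2: the variational identity
  have hBi1 : ∀ f, B (E.symm.toContinuousLinearMap f) = f := fun f => by
    have : B (E.symm f) = E (E.symm f) := (hEB _).symm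
    simp [this]
  set g : lp (fun _ : S => ℂ) 2 := E.symm.toContinuousLinearMap (evec x) with hgdef
  have hBg : B g = evec x := hBi1 _
  -- coordinate lemmas
  have hcoordL : ∀ v : lp (fun _ : S => ℂ) 2, (inner ℂ (evec x) v : ℂ) = v x := by
    intro v
    rw [evec, lp.inner_single_left]
    simp [RCLike.inner_apply]
  have hcoordR : ∀ v : lp (fun _ : S => ℂ) 2,
      (inner ℂ v (evec x) : ℂ) = (starRingEnd ℂ) (v x) := by
    intro v
    rw [evec, lp.inner_single_right]
    simp [RCLike.inner_apply]
  set d : ℂ := inner ℂ (evec x) g with hd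
  have hgx : (g : ∀ _ : S, ℂ) x = d := (hcoordL g).symm
  have hevne : evec (S := S) x ≠ 0 := by
    intro h
    have : (evec x : ∀ _ : S, ℂ) x = 0 := by rw [h]; simp
    rw [evec, lp.single_apply_self] at this
    exact one_ne_zero this
  have hgne : g ≠ 0 := by
    intro h
    rw [h] at hBg
    simp only [map_zero] at hBg
    exact hevne hBg.symm
  have hdg : d = inner ℂ g (B g) := by rw [hd, ← hBg, hsa]
  have hdre : 0 < d.re := by
    rw [hdg]
    have := hcoer g
    have : 0 < lam * ‖g‖ ^ 2 := by
      have : 0 < ‖g‖ := norm_pos_iff.mpr hgne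
      positivity
    linarith [hcoer g]
  have hdim : d.im = 0 := by
    have h1 : (starRingEnd ℂ) d = d := by
      rw [hdg, inner_conj_symm, hsa]
    exact Complex.conj_eq_iff_im.mp h1
  have hdne : d ≠ 0 := fun h => by simp [h] at hdre
  set c : ℂ := d⁻¹ with hc
  have hcim : c.im = 0 := by
    rw [hc, Complex.inv_im, hdim]
    simp
  set w : lp (fun _ : S => ℂ) 2 := c • g with hw
  have hBw : B w = c • evec x := by rw [hw, map_smul, hBg]
  have hwx : (w : ∀ _ : S, ℂ) x = 1 := by
    have : (w : ∀ _ : S, ℂ) x = c • (g : ∀ _ : S, ℂ) x := by rw [hw]; simp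
    rw [this, hgx, smul_eq_mul, hc, inv_mul_cancel₀ hdne]
  have hexx : (evec x : ∀ _ : S, ℂ) x = 1 := by rw [evec, lp.single_apply_self]
  -- the value of the quadratic form at w
  have he3 : (inner ℂ w (B w) : ℂ) = c := by
    rw [hBw, inner_smul_right, hcoordR, hwx]
    simp
  -- decomposition identity
  have hval : ∀ u : lp (fun _ : S => ℂ) 2, (u : ∀ _ : S, ℂ) x = 1 →
      (inner ℂ u (B u) : ℂ) = inner ℂ (u - w) (B (u - w)) + c := by
    intro u hux
    have huwx : ((u - w : lp (fun _ : S => ℂ) 2) : ∀ _ : S, ℂ) x = 0 := by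
      have : ((u - w : lp (fun _ : S => ℂ) 2) : ∀ _ : S, ℂ) x
          = (u : ∀ _ : S, ℂ) x - (w : ∀ _ : S, ℂ) x := by simp
      rw [this, hux, hwx, sub_self]
    have he1 : (inner ℂ (u - w) (B w) : ℂ) = 0 := by
      rw [hBw, inner_smul_right, hcoordR, huwx]
      simp
    have he2 : (inner ℂ w (B (u - w)) : ℂ) = 0 := by
      rw [← hsa, hBw, inner_smul_left, hcoordL, huwx]
      simp
    calc (inner ℂ u (B u) : ℂ) = inner ℂ ((u - w) + w) (B ((u - w) + w)) := by
          rw [sub_add_cancel]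
      _ = inner ℂ (u - w) (B (u - w)) + inner ℂ (u - w) (B w)
            + (inner ℂ w (B (u - w)) + inner ℂ w (B w)) := by
          rw [map_add, inner_add_left, inner_add_right, inner_add_right]
      _ = inner ℂ (u - w) (B (u - w)) + c := by rw [he1, he2, he3]; ring
  set V : Submodule ℂ (lp (fun _ : S => ℂ) 2) :=
    Submodule.span ℂ (evec '' {y : S | y ≠ x}) with hV
  set φ : lp (fun _ : S => ℂ) 2 → ℝ :=
    fun f => (inner ℂ (evec x - f) (B (evec x - f)) : ℂ).re with hφ
  -- elements of V vanish at x
  have hVx : ∀ f ∈ V, (f : ∀ _ : S, ℂ) x = 0 := by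
    intro f hf
    induction hf using Submodule.span_induction with
    | mem f hf =>
      obtain ⟨y, hy, rfl⟩ := hf
      rw [evec, lp.single_apply_ne 2 y 1 (Ne.symm hy)]
    | zero => simp
    | add f g _ _ hfx hgx => simp [hfx, hgx]
    | smul a f _ hfx => simp [hfx]
  -- lower bound
  have hlow : ∀ r ∈ φ '' (V : Set (lp (fun _ : S => ℂ) 2)), c.re ≤ r := by
    rintro r ⟨f, hf, rfl⟩
    have hux : ((evec x - f : lp (fun _ : S => ℂ) 2) : ∀ _ : S, ℂ) x = 1 := by
      have : ((evec x - f : lp (fun _ : S => ℂ) 2) : ∀ _ : S, ℂ) x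
          = (evec x : ∀ _ : S, ℂ) x - (f : ∀ _ : S, ℂ) x := by simp
      rw [this, hexx, hVx f hf, sub_zero]
    have := hval (evec x - f) hux
    have hre : φ f = (inner ℂ ((evec x - f) - w) (B ((evec x - f) - w)) : ℂ).re + c.re := by
      rw [hφ]
      simp only
      rw [this, Complex.add_re]
    rw [hre]
    have h0 : 0 ≤ (inner ℂ ((evec x - f) - w) (B ((evec x - f) - w)) : ℂ).re := by
      have := hcoer ((evec x - f) - w)
      nlinarith [norm_nonneg ((evec x - f) - w), hlam.le]
    linarith
  -- approximation
  set fs : lp (fun _ : S => ℂ) 2 := evec x - w with hfs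
  have hfsx : (fs : ∀ _ : S, ℂ) x = 0 := by
    have : (fs : ∀ _ : S, ℂ) x = (evec x : ∀ _ : S, ℂ) x - (w : ∀ _ : S, ℂ) x := by
      rw [hfs]; simp
    rw [this, hexx, hwx, sub_self]
  have hsum : HasSum (fun i : S => lp.single 2 i (fs i)) fs :=
    lp.hasSum_single (by norm_num) fs
  have hmem : ∀ s : Finset S, (∑ i ∈ s, lp.single 2 i (fs i)) ∈ V := by
    intro s
    refine Submodule.sum_mem _ fun i _ => ?_
    by_cases hi : i = x
    · subst hi
      rw [show (fs i : ℂ) = 0 from hfsx]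
      have : lp.single (E := fun _ : S => ℂ) 2 i ((0:ℂ) • (1:ℂ)) = 0 := by
        rw [lp.single_smul]; simp
      have h0 : lp.single (E := fun _ : S => ℂ) 2 i (0:ℂ) = 0 := by simpa using this
      rw [h0]
      exact Submodule.zero_mem _
    · have : lp.single (E := fun _ : S => ℂ) 2 i (fs i) = (fs i : ℂ) • evec i := by
        rw [evec, ← lp.single_smul]
        norm_num
      rw [this]
      exact Submodule.smul_mem _ _ (Submodule.subset_span ⟨i, hi, rfl⟩)
  have hcont : Continuous φ := by
    rw [hφ]
    exact Complex.continuous_re.comp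
      ((continuous_const.sub continuous_id).inner
        (B.continuous.comp (continuous_const.sub continuous_id)))
  have hφfs : φ fs = c.re := by
    rw [hφ]
    simp only
    have : evec x - fs = w := by rw [hfs, sub_sub_cancel]
    rw [this, he3]
  have htend : Filter.Tendsto (fun s : Finset S => φ (∑ i ∈ s, lp.single 2 i (fs i)))
      Filter.atTop (nhds c.re) := by
    rw [← hφfs]
    exact (hcont.tendsto fs).comp hsum
  have hglb : IsGLB (φ '' (V : Set (lp (fun _ : S => ℂ) 2))) c.re := by
    constructor
    · exact hlow
    · intro b hb
      refine ge_of_tendsto' htend fun s => ?_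
      exact hb ⟨_, hmem s, rfl⟩
  have hne : (φ '' (V : Set (lp (fun _ : S => ℂ) 2))).Nonempty :=
    ⟨φ 0, 0, Submodule.zero_mem _, rfl⟩
  have hInf : sInf (φ '' (V : Set (lp (fun _ : S => ℂ) 2))) = c.re := hglb.csInf_eq hne
  rw [hInf]
  apply Complex.ext
  · simp
  · simp [hcim]
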